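/- Let L ≥ 1 and M_AP ≥ 1 be integers, M = L·M_AP, η > 0, q > 0, α_⊥ > 0, κ > 0. For m = 0, …, M−1 set α_m := α_⊥ · (1 + ⌊m/M_AP⌋²η)^{−q/2}, and let φ_0, …, φ_{M−1} be complex numbers with |φ_m| = 1. Let (ν_m)_{m=0}^{M-1} be independent complex-valued random variables on a probability space with E[ν_m] = 0 and E[|ν_m|²] = 1. Define the instantaneous beamforming gain β̄ := (1/M) · |√(κ/(1+κ))·Σ_{m<M} α_m + √(1/(1+κ))·Σ_{m<M} α_m ν_m conj(φ_m)|². Then E[β̄] = (α_⊥²/(1+κ)) · ( κ·M_AP·G(L)² + Γ(L) ), where G(L) := (Σ_{l=0}^{L-1}(1+l²η)^{−q/2})/√L and Γ(L) := (1/L)·Σ_{l=0}^{L-1}(1+l²η)^{−q}. -/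

import Mathlib

open MeasureTheory ProbabilityTheory Finset

lemma indepFun_integral_mul_complex {Ω : Type*} [MeasurableSpace Ω] {μ : Measure Ω}
    {X Y : Ω → ℂ} (h : IndepFun X Y μ) (hX : Integrable X μ) (hY : Integrable Y μ) :
    ∫ ω, X ω * Y ω ∂μ = (∫ ω, X ω ∂μ) * ∫ ω, Y ω ∂μ := by
  have mre : Measurable (Complex.re) := Complex.measurable_re
  have mim : Measurable (Complex.im) := Complex.measurable_im
  have hrr : IndepFun (fun ω => (X ω).re) (fun ω => (Y ω).re) μ := h.comp mre mre
  have hri : IndepFun (fun ω => (X ω).re) (fun ω => (Y ω).im) μ := h.comp mre mim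
  have hir : IndepFun (fun ω => (X ω).im) (fun ω => (Y ω).re) μ := h.comp mim mre
  have hii : IndepFun (fun ω => (X ω).im) (fun ω => (Y ω).im) μ := h.comp mim mim
  have iXr : Integrable (fun ω => (X ω).re) μ := hX.re
  have iXi : Integrable (fun ω => (X ω).im) μ := hX.im
  have iYr : Integrable (fun ω => (Y ω).re) μ := hY.re
  have iYi : Integrable (fun ω => (Y ω).im) μ := hY.im
  have i1 : Integrable (fun ω => (X ω).re * (Y ω).re) μ := hrr.integrable_mul iXr iYr
  have i2 : Integrable (fun ω => (X ω).im * (Y ω).im) μ := hii.integrable_mul iXi iYi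
  have i3 : Integrable (fun ω => (X ω).re * (Y ω).im) μ := hri.integrable_mul iXr iYi
  have i4 : Integrable (fun ω => (X ω).im * (Y ω).re) μ := hir.integrable_mul iXi iYr
  have hXY : Integrable (fun ω => X ω * Y ω) μ := h.integrable_mul hX hY
  apply Complex.ext
  · rw [show (∫ ω, X ω * Y ω ∂μ).re = ∫ ω, (X ω * Y ω).re ∂μ from (integral_re hXY).symm]
    simp only [Complex.mul_re]
    rw [integral_sub i1 i2, hrr.integral_fun_mul_eq_mul_integral iXr.1 iYr.1,
      hii.integral_fun_mul_eq_mul_integral iXi.1 iYi.1,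
      show (∫ ω, (X ω).re ∂μ) = (∫ ω, X ω ∂μ).re from integral_re hX,
      show (∫ ω, (Y ω).re ∂μ) = (∫ ω, Y ω ∂μ).re from integral_re hY,
      show (∫ ω, (X ω).im ∂μ) = (∫ ω, X ω ∂μ).im from integral_im hX,
      show (∫ ω, (Y ω).im ∂μ) = (∫ ω, Y ω ∂μ).im from integral_im hY]
  · rw [show (∫ ω, X ω * Y ω ∂μ).im = ∫ ω, (X ω * Y ω).im ∂μ from (integral_im hXY).symm]
    simp only [Complex.mul_im]
    rw [integral_add i3 i4, hri.integral_fun_mul_eq_mul_integral iXr.1 iYi.1,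
      hir.integral_fun_mul_eq_mul_integral iXi.1 iYr.1,
      show (∫ ω, (X ω).re ∂μ) = (∫ ω, X ω ∂μ).re from integral_re hX,
      show (∫ ω, (Y ω).re ∂μ) = (∫ ω, Y ω ∂μ).re from integral_re hY,
      show (∫ ω, (X ω).im ∂μ) = (∫ ω, X ω ∂μ).im from integral_im hX,
      show (∫ ω, (Y ω).im ∂μ) = (∫ ω, Y ω ∂μ).im from integral_im hY]

lemma my_sum_div (MAP : ℕ) (hMAP : 0 < MAP) (g : ℕ → ℝ) (L : ℕ) :
    ∑ m ∈ Finset.range (L * MAP), g (m / MAP) = (MAP : ℝ) * ∑ l ∈ Finset.range L, g l := by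
  induction L with
  | zero => simp
  | succ n ih =>
    rw [Nat.succ_mul, Finset.sum_range_add, ih, Finset.sum_range_succ]
    have h : ∀ k ∈ Finset.range MAP, g ((n * MAP + k) / MAP) = g n := by
      intro k hk
      rw [mul_comm, add_comm, Nat.add_mul_div_left _ _ hMAP,
        Nat.div_eq_of_lt (Finset.mem_range.mp hk), zero_add]
    rw [Finset.sum_congr rfl h, Finset.sum_const, Finset.card_range, nsmul_eq_mul]
    ring

lemma my_second_moment {Ω : Type*} [MeasurableSpace Ω] (μ : Measure Ω) [IsProbabilityMeasure μ]
    (M : ℕ) (c : ℕ → ℂ) (ν : ℕ → Ω → ℂ)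
    (hmeas : ∀ m, Measurable (ν m))
    (hindep : iIndepFun ν μ)
    (hL2 : ∀ m, MemLp (ν m) 2 μ)
    (hmean : ∀ m, ∫ ω, ν m ω ∂μ = 0)
    (hvar : ∀ m, ∫ ω, ‖ν m ω‖ ^ 2 ∂μ = 1) :
    ∫ ω, ‖∑ m ∈ Finset.range M, c m * ν m ω‖ ^ 2 ∂μ = ∑ m ∈ Finset.range M, ‖c m‖ ^ 2 := by
  set f : ℕ → Ω → ℂ := fun m ω => c m * ν m ω with hf
  have hnormsq : ∀ z : ℂ, ‖z‖ ^ 2 = (z * (starRingEnd ℂ) z).re := by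
    intro z
    rw [Complex.mul_conj, Complex.ofReal_re, Complex.normSq_eq_norm_sq]
  have hfint : ∀ m, Integrable (f m) μ := fun m =>
    ((hL2 m).const_mul (c m)).integrable one_le_two
  have hfmean : ∀ m, ∫ ω, f m ω ∂μ = 0 := by
    intro m
    simp only [hf]
    rw [integral_const_mul, hmean m, mul_zero]
  -- integrability of cross products
  have Iij : ∀ i j : ℕ, Integrable (fun ω => (f i ω * (starRingEnd ℂ) (f j ω)).re) μ := by
    intro i j
    rcases eq_or_ne i j with rfl | hij
    · have h1 : Integrable (fun ω => ‖c i‖ ^ 2 * ‖ν i ω‖ ^ 2) μ :=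
        ((hL2 i).norm.integrable_sq).const_mul _
      refine h1.congr (Filter.Eventually.of_forall fun ω => ?_)
      show ‖c i‖ ^ 2 * ‖ν i ω‖ ^ 2 = (f i ω * (starRingEnd ℂ) (f i ω)).re
      rw [← hnormsq, hf]
      simp only [norm_mul]
      ring
    · have hI : IndepFun (f i) (fun ω => (starRingEnd ℂ) (f j ω)) μ := by
        have h0 := hindep.indepFun hij
        exact h0.comp (measurable_const.mul measurable_id)
          (Complex.continuous_conj.measurable.comp (measurable_const.mul measurable_id))
      have h2 : Integrable (fun ω => (starRingEnd ℂ) (f j ω)) μ := by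
        refine ⟨Complex.continuous_conj.comp_aestronglyMeasurable (hfint j).1, ?_⟩
        simpa [HasFiniteIntegral] using (hfint j).2
      exact ((hI.integrable_mul (hfint i) h2).congr
        (Filter.Eventually.of_forall fun ω => rfl)).re
  have key : ∀ i ∈ Finset.range M, ∀ j ∈ Finset.range M,
      ∫ ω, (f i ω * (starRingEnd ℂ) (f j ω)).re ∂μ
        = if i = j then ‖c i‖ ^ 2 else 0 := by
    intro i _ j _
    rcases eq_or_ne i j with rfl | hij
    · rw [if_pos rfl]
      have : ∫ ω, (f i ω * (starRingEnd ℂ) (f i ω)).re ∂μ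
          = ∫ ω, ‖c i‖ ^ 2 * ‖ν i ω‖ ^ 2 ∂μ := by
        refine integral_congr_ae (Filter.Eventually.of_forall fun ω => ?_)
        show (f i ω * (starRingEnd ℂ) (f i ω)).re = ‖c i‖ ^ 2 * ‖ν i ω‖ ^ 2
        rw [← hnormsq, hf]
        simp only [norm_mul]
        ring
      rw [this, integral_const_mul, hvar i, mul_one]
    · rw [if_neg hij]
      have hI : IndepFun (f i) (fun ω => (starRingEnd ℂ) (f j ω)) μ := by
        have h0 := hindep.indepFun hij
        exact h0.comp (measurable_const.mul measurable_id)
          (Complex.continuous_conj.measurable.comp (measurable_const.mul measurable_id))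
      have h2 : Integrable (fun ω => (starRingEnd ℂ) (f j ω)) μ := by
        refine ⟨Complex.continuous_conj.comp_aestronglyMeasurable (hfint j).1, ?_⟩
        simpa [HasFiniteIntegral] using (hfint j).2
      have h3 : Integrable (fun ω => f i ω * (starRingEnd ℂ) (f j ω)) μ :=
        (hI.integrable_mul (hfint i) h2).congr (Filter.Eventually.of_forall fun ω => rfl)
      rw [show (∫ ω, (f i ω * (starRingEnd ℂ) (f j ω)).re ∂μ)
          = (∫ ω, f i ω * (starRingEnd ℂ) (f j ω) ∂μ).re from integral_re h3,
        indepFun_integral_mul_complex hI (hfint i) h2, hfmean i, zero_mul, Complex.zero_re]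
  have expand : ∀ ω, ‖∑ m ∈ Finset.range M, c m * ν m ω‖ ^ 2
      = ∑ i ∈ Finset.range M, ∑ j ∈ Finset.range M,
          (f i ω * (starRingEnd ℂ) (f j ω)).re := by
    intro ω
    rw [hnormsq, map_sum, Finset.sum_mul_sum, Complex.re_sum]
    congr 1
    ext i
    rw [Complex.re_sum]
  calc ∫ ω, ‖∑ m ∈ Finset.range M, c m * ν m ω‖ ^ 2 ∂μ
      = ∫ ω, ∑ i ∈ Finset.range M, ∑ j ∈ Finset.range M,
          (f i ω * (starRingEnd ℂ) (f j ω)).re ∂μ :=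
        integral_congr_ae (Filter.Eventually.of_forall expand)
    _ = ∑ i ∈ Finset.range M, ∑ j ∈ Finset.range M,
          ∫ ω, (f i ω * (starRingEnd ℂ) (f j ω)).re ∂μ := by
        rw [integral_finset_sum _ fun i _ => integrable_finset_sum _ fun j _ => Iij i j]
        exact Finset.sum_congr rfl fun i _ => integral_finset_sum _ fun j _ => Iij i j
    _ = ∑ i ∈ Finset.range M, ∑ j ∈ Finset.range M, (if i = j then ‖c i‖ ^ 2 else 0) := by
        refine Finset.sum_congr rfl fun i hi => Finset.sum_congr rfl fun j hj => key i hi j hj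
    _ = ∑ i ∈ Finset.range M, ‖c i‖ ^ 2 := by
        refine Finset.sum_congr rfl fun i hi => ?_
        rw [Finset.sum_ite_eq, if_pos hi]

/-- The average-beamforming-gain formula of eq. (16) of the paper: for the
spatially non-stationary Rician channel with per-AP-constant attenuation
`α_m = α_⊥(1 + ⌊m/M_AP⌋²η)^{-q/2}`, Rician K-factor `κ`, unit-modulus LoS
phases `φ_m`, independent zero-mean unit-variance fading `ν_m`, and LoS-based
beamforming, the mean of the instantaneous beamforming gain
`β̄ = (1/M)|√(κ/(1+κ))·Σ α_m + √(1/(1+κ))·Σ α_m ν_m conj(φ_m)|²` equals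
`(α_⊥²/(1+κ))·(κ·M_AP·G(L)² + Γ(L))`. -/
theorem mean_beamforming_gain
    {Ω : Type*} [MeasurableSpace Ω] (μ : Measure Ω) [IsProbabilityMeasure μ]
    (L MAP : ℕ) (hL : 1 ≤ L) (hMAP : 1 ≤ MAP) (M : ℕ) (hM : M = L * MAP)
    (η q αbot κ : ℝ) (hη : 0 < η) (hq : 0 < q) (hαbot : 0 < αbot) (hκ : 0 < κ)
    (α : ℕ → ℝ)
    (hα : ∀ m : ℕ, α m = αbot * (1 + ((m / MAP : ℕ) : ℝ) ^ 2 * η) ^ (-(q / 2)))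
    (φ : ℕ → ℂ) (hφ : ∀ m, ‖φ m‖ = 1)
    (ν : ℕ → Ω → ℂ)
    (hmeas : ∀ m, Measurable (ν m))
    (hindep : iIndepFun ν μ)
    (hL2 : ∀ m, MemLp (ν m) 2 μ)
    (hmean : ∀ m, ∫ ω, ν m ω ∂μ = 0)
    (hvar : ∀ m, ∫ ω, ‖ν m ω‖ ^ 2 ∂μ = 1) :
    ∫ ω, (1 / (M : ℝ)) *
        ‖(Real.sqrt (κ / (1 + κ)) : ℂ) * ∑ m ∈ Finset.range M, (α m : ℂ) +
          (Real.sqrt (1 / (1 + κ)) : ℂ) *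
            ∑ m ∈ Finset.range M, (α m : ℂ) * ν m ω * (starRingEnd ℂ) (φ m)‖ ^ 2 ∂μ
      = (αbot ^ 2 / (1 + κ)) *
          (κ * MAP *
            ((∑ l ∈ Finset.range L, (1 + (l : ℝ) ^ 2 * η) ^ (-(q / 2))) / Real.sqrt L) ^ 2
          + (1 / (L : ℝ)) * ∑ l ∈ Finset.range L, (1 + (l : ℝ) ^ 2 * η) ^ (-q)) := by
  have hκ1 : (0:ℝ) < 1 + κ := by linarith
  have hLpos : (0:ℝ) < L := by exact_mod_cast hL
  have hMAPpos : (0:ℝ) < MAP := by exact_mod_cast hMAP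
  set c : ℕ → ℂ := fun m => (α m : ℂ) * (starRingEnd ℂ) (φ m) with hc
  set S : Ω → ℂ := fun ω => ∑ m ∈ Finset.range M, c m * ν m ω with hS
  set a : ℂ := (Real.sqrt (κ / (1 + κ)) : ℂ) * ∑ m ∈ Finset.range M, (α m : ℂ) with ha
  set b : ℂ := (Real.sqrt (1 / (1 + κ)) : ℂ) with hb
  have hnormsq : ∀ z : ℂ, ‖z‖ ^ 2 = Complex.normSq z := fun z => by
    rw [Complex.normSq_eq_norm_sq]
  -- rewrite the statement sum as S
  have hSrw : ∀ ω, ∑ m ∈ Finset.range M, (α m : ℂ) * ν m ω * (starRingEnd ℂ) (φ m) = S ω := by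
    intro ω
    exact Finset.sum_congr rfl fun m _ => by rw [hc]; ring
  -- basic integrability
  have hfint : ∀ m : ℕ, Integrable (fun ω => c m * ν m ω) μ := fun m =>
    ((hL2 m).const_mul (c m)).integrable one_le_two
  have hSint : Integrable S μ := integrable_finset_sum _ fun m _ => hfint m
  have hS0 : ∫ ω, S ω ∂μ = 0 := by
    rw [hS, integral_finset_sum _ fun m _ => hfint m]
    refine Finset.sum_eq_zero fun m _ => ?_
    rw [integral_const_mul, hmean m, mul_zero]
  have hconjS : Integrable (fun ω => (starRingEnd ℂ) (b * S ω)) μ := by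
    refine ⟨Complex.continuous_conj.comp_aestronglyMeasurable (hSint.const_mul b).1, ?_⟩
    simpa [HasFiniteIntegral] using (hSint.const_mul b).2
  have hlinC : Integrable (fun ω => a * (starRingEnd ℂ) (b * S ω)) μ := hconjS.const_mul a
  have hlin : Integrable (fun ω => (a * (starRingEnd ℂ) (b * S ω)).re) μ :=
    hlinC.re.congr (Filter.Eventually.of_forall fun ω => rfl)
  have hS2 : MemLp S 2 μ := by
    have := memLp_finset_sum (Finset.range M) (f := fun m ω => c m * ν m ω)
      (fun m _ => (hL2 m).const_mul (c m))
    exact this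
  have hquad : Integrable (fun ω => ‖S ω‖ ^ 2) μ := hS2.norm.integrable_sq
  -- pointwise expansion
  have hpt : ∀ ω, (1 / (M : ℝ)) * ‖a + b * S ω‖ ^ 2
      = (1 / (M : ℝ)) * ‖a‖ ^ 2 +
        ((2 / (M : ℝ)) * (a * (starRingEnd ℂ) (b * S ω)).re +
          (1 / (M : ℝ)) * ‖b‖ ^ 2 * ‖S ω‖ ^ 2) := by
    intro ω
    have h1 : ‖a + b * S ω‖ ^ 2 = ‖a‖ ^ 2 + ‖b * S ω‖ ^ 2
        + 2 * (a * (starRingEnd ℂ) (b * S ω)).re := by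
      rw [hnormsq, hnormsq, hnormsq, Complex.normSq_add]
    rw [h1]
    simp only [norm_mul, mul_pow]
    ring
  -- the linear term integrates to zero
  have hlin0 : ∫ ω, (a * (starRingEnd ℂ) (b * S ω)).re ∂μ = 0 := by
    rw [show (∫ ω, (a * (starRingEnd ℂ) (b * S ω)).re ∂μ)
        = (∫ ω, a * (starRingEnd ℂ) (b * S ω) ∂μ).re from integral_re hlinC,
      integral_const_mul, integral_conj, integral_const_mul, hS0, mul_zero, map_zero, mul_zero,
      Complex.zero_re]
  -- the quadratic term
  have hq2 : ∫ ω, ‖S ω‖ ^ 2 ∂μ = ∑ m ∈ Finset.range M, ‖c m‖ ^ 2 :=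
    my_second_moment μ M c ν hmeas hindep hL2 hmean hvar
  -- compute the integral
  have hint : ∫ ω, (1 / (M : ℝ)) *
        ‖a + b * ∑ m ∈ Finset.range M, (α m : ℂ) * ν m ω * (starRingEnd ℂ) (φ m)‖ ^ 2 ∂μ
      = (1 / (M : ℝ)) * ‖a‖ ^ 2
        + (1 / (M : ℝ)) * ‖b‖ ^ 2 * ∑ m ∈ Finset.range M, ‖c m‖ ^ 2 := by
    calc ∫ ω, (1 / (M : ℝ)) *
          ‖a + b * ∑ m ∈ Finset.range M, (α m : ℂ) * ν m ω * (starRingEnd ℂ) (φ m)‖ ^ 2 ∂μ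
        = ∫ ω, ((1 / (M : ℝ)) * ‖a‖ ^ 2 +
            ((2 / (M : ℝ)) * (a * (starRingEnd ℂ) (b * S ω)).re +
              (1 / (M : ℝ)) * ‖b‖ ^ 2 * ‖S ω‖ ^ 2)) ∂μ := by
          refine integral_congr_ae (Filter.Eventually.of_forall fun ω => ?_)
          simp only [hSrw ω, hpt ω]
      _ = (1 / (M : ℝ)) * ‖a‖ ^ 2
            + ((2 / (M : ℝ)) * ∫ ω, (a * (starRingEnd ℂ) (b * S ω)).re ∂μ
              + (1 / (M : ℝ)) * ‖b‖ ^ 2 * ∫ ω, ‖S ω‖ ^ 2 ∂μ) := by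
          have hlin' : Integrable
              (fun ω => 2 / (M : ℝ) * (a * (starRingEnd ℂ) (b * S ω)).re) μ :=
            hlin.const_mul _
          have hquad' : Integrable (fun ω => 1 / (M : ℝ) * ‖b‖ ^ 2 * ‖S ω‖ ^ 2) μ :=
            (hquad.const_mul (1 / (M : ℝ) * ‖b‖ ^ 2)).congr
              (Filter.Eventually.of_forall fun ω => by ring)
          have E1 : ∫ ω, (1 / (M : ℝ) * ‖a‖ ^ 2 +
                (2 / (M : ℝ) * (a * (starRingEnd ℂ) (b * S ω)).re
                  + 1 / (M : ℝ) * ‖b‖ ^ 2 * ‖S ω‖ ^ 2)) ∂μ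
              = ∫ _ω, (1 / (M : ℝ) * ‖a‖ ^ 2) ∂μ +
                ∫ ω, (2 / (M : ℝ) * (a * (starRingEnd ℂ) (b * S ω)).re
                  + 1 / (M : ℝ) * ‖b‖ ^ 2 * ‖S ω‖ ^ 2) ∂μ :=
            integral_add (integrable_const _) (hlin'.add hquad')
          have E2 : ∫ ω, (2 / (M : ℝ) * (a * (starRingEnd ℂ) (b * S ω)).re
                  + 1 / (M : ℝ) * ‖b‖ ^ 2 * ‖S ω‖ ^ 2) ∂μ
              = ∫ ω, (2 / (M : ℝ) * (a * (starRingEnd ℂ) (b * S ω)).re) ∂μ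
                + ∫ ω, (1 / (M : ℝ) * ‖b‖ ^ 2 * ‖S ω‖ ^ 2) ∂μ :=
            integral_add hlin' hquad'
          have E3 : ∫ ω, (2 / (M : ℝ) * (a * (starRingEnd ℂ) (b * S ω)).re) ∂μ
              = 2 / (M : ℝ) * ∫ ω, (a * (starRingEnd ℂ) (b * S ω)).re ∂μ :=
            integral_const_mul _ _
          have E4 : ∫ ω, (1 / (M : ℝ) * ‖b‖ ^ 2 * ‖S ω‖ ^ 2) ∂μ
              = 1 / (M : ℝ) * ‖b‖ ^ 2 * ∫ ω, ‖S ω‖ ^ 2 ∂μ := by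
            rw [show (fun ω => 1 / (M : ℝ) * ‖b‖ ^ 2 * ‖S ω‖ ^ 2)
                = fun ω => (1 / (M : ℝ) * ‖b‖ ^ 2) * ‖S ω‖ ^ 2 from rfl,
              integral_const_mul]
          rw [E1, E2, E3, E4, integral_const, probReal_univ, smul_eq_mul,
            one_mul]
      _ = (1 / (M : ℝ)) * ‖a‖ ^ 2
            + (1 / (M : ℝ)) * ‖b‖ ^ 2 * ∑ m ∈ Finset.range M, ‖c m‖ ^ 2 := by
          rw [hlin0, hq2, mul_zero, zero_add]
  rw [hint]
  -- now the numeric computation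
  have hcnorm : ∀ m, ‖c m‖ ^ 2 = α m ^ 2 := by
    intro m
    rw [hc]
    simp only [norm_mul, Complex.norm_real, RCLike.norm_conj, hφ m, mul_one,
      Real.norm_eq_abs, sq_abs]
  have hg2 : ∀ l : ℕ, ((1 + (l : ℝ) ^ 2 * η) ^ (-(q / 2))) ^ 2
      = (1 + (l : ℝ) ^ 2 * η) ^ (-q) := by
    intro l
    have hpos : (0:ℝ) < 1 + (l : ℝ) ^ 2 * η := by positivity
    rw [← Real.rpow_natCast ((1 + (l:ℝ)^2*η) ^ (-(q/2))) 2, ← Real.rpow_mul hpos.le]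
    norm_num
  set G1 : ℝ := ∑ l ∈ Finset.range L, (1 + (l : ℝ) ^ 2 * η) ^ (-(q / 2)) with hG1
  set G2 : ℝ := ∑ l ∈ Finset.range L, (1 + (l : ℝ) ^ 2 * η) ^ (-q) with hG2
  have hsum1 : ∑ m ∈ Finset.range M, α m = αbot * (MAP * G1) := by
    calc ∑ m ∈ Finset.range M, α m
        = ∑ m ∈ Finset.range (L * MAP), αbot * (1 + ((m / MAP : ℕ) : ℝ) ^ 2 * η) ^ (-(q / 2)) := by
          rw [hM]; exact Finset.sum_congr rfl fun m _ => hα m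
      _ = αbot * ∑ m ∈ Finset.range (L * MAP), (1 + ((m / MAP : ℕ) : ℝ) ^ 2 * η) ^ (-(q / 2)) := by
          rw [Finset.mul_sum]
      _ = αbot * (MAP * G1) := by
          rw [my_sum_div MAP hMAP (fun l => (1 + (l : ℝ) ^ 2 * η) ^ (-(q / 2))) L, hG1]
  have hsum2 : ∑ m ∈ Finset.range M, α m ^ 2 = αbot ^ 2 * (MAP * G2) := by
    calc ∑ m ∈ Finset.range M, α m ^ 2
        = ∑ m ∈ Finset.range (L * MAP), αbot ^ 2 * (1 + ((m / MAP : ℕ) : ℝ) ^ 2 * η) ^ (-q) := by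
          rw [hM]
          refine Finset.sum_congr rfl fun m _ => ?_
          rw [hα m, mul_pow, hg2 (m / MAP)]
      _ = αbot ^ 2 * ∑ m ∈ Finset.range (L * MAP), (1 + ((m / MAP : ℕ) : ℝ) ^ 2 * η) ^ (-q) := by
          rw [Finset.mul_sum]
      _ = αbot ^ 2 * (MAP * G2) := by
          rw [my_sum_div MAP hMAP (fun l => (1 + (l : ℝ) ^ 2 * η) ^ (-q)) L, hG2]
  have hanorm : ‖a‖ ^ 2 = (κ / (1 + κ)) * (αbot * (MAP * G1)) ^ 2 := by
    rw [ha]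
    have : ∑ m ∈ Finset.range M, ((α m : ℝ) : ℂ) = ((∑ m ∈ Finset.range M, α m : ℝ) : ℂ) := by
      push_cast; rfl
    rw [this, norm_mul]
    simp only [Complex.norm_real, Real.norm_eq_abs, mul_pow, sq_abs]
    rw [Real.sq_sqrt (by positivity : (0:ℝ) ≤ κ / (1 + κ)), hsum1]
    ring
  have hbnorm : ‖b‖ ^ 2 = 1 / (1 + κ) := by
    rw [hb]
    simp only [Complex.norm_real, Real.norm_eq_abs, sq_abs]
    rw [Real.sq_sqrt (by positivity : (0:ℝ) ≤ 1 / (1 + κ))]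
  have hcsum : ∑ m ∈ Finset.range M, ‖c m‖ ^ 2 = αbot ^ 2 * (MAP * G2) := by
    rw [← hsum2]; exact Finset.sum_congr rfl fun m _ => hcnorm m
  rw [hanorm, hbnorm, hcsum, hM]
  have hsq : (G1 / Real.sqrt L) ^ 2 = G1 ^ 2 / L := by
    rw [div_pow, Real.sq_sqrt hLpos.le]
  rw [hsq]
  have hMcast : ((L * MAP : ℕ) : ℝ) = (L : ℝ) * (MAP : ℝ) := by push_cast; ring
  rw [hMcast]
  field_simp
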